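/- (Proposition 6.4; a ZFC result.) Let I : ZFSet satisfy the algebraic characterization of weak inaccessibility: (1) I is regular; (2) ω ∈ I (ZFSet.omega ∈ I); (3) for every a ∈ I, ⋃ a ∈ I; (4) I is ∧-closed: for every a ∈ I such that every u ∈ a satisfies u ⊆ {∅}, the set ⋀a := {x ∈ {∅} | ∀ u ∈ a, x ∈ u} belongs to I; (5) for all a, b ∈ I there exists c ∈ I which is full in mv(a, b). Then there exists a strongly inaccessible cardinal κ (Cardinal.IsInaccessible κ) such that for every x : ZFSet, x ∈ I ↔ ZFSet.rank x < κ.ord; that is, I = V_κ. -/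

import Mathlib

universe u

/-- A ZF-set is transitive if every element of an element is an element. -/
def ZTransitive (A : ZFSet.{u}) : Prop :=
  ∀ x ∈ A, ∀ y ∈ x, y ∈ A

/-- A ZF-set `A` is regular if it is transitive and inhabited, and for every `a ∈ A` and every
set `R` of pairs with `R ⊆ A ×ˢ A` which is a multi-valued function on `a` into `A`, there is
`c ∈ A` such that `R` restricted to `a × c` is a multi-valued function from `a` to `c` that is
surjective on `c`. -/
def ZRegular (A : ZFSet.{u}) : Prop :=
  ZTransitive A ∧ (∃ x, x ∈ A) ∧
    ∀ a ∈ A, ∀ R : ZFSet.{u}, R ⊆ ZFSet.prod A A →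
      (∀ x ∈ a, ∃ y ∈ A, ZFSet.pair x y ∈ R) →
      ∃ c ∈ A, (∀ x ∈ a, ∃ y ∈ c, ZFSet.pair x y ∈ R) ∧
        (∀ y ∈ c, ∃ x ∈ a, ZFSet.pair x y ∈ R)

/-- `Zmv a b r` : `r` is a multi-valued function from `a` to `b`. -/
def Zmv (a b r : ZFSet.{u}) : Prop :=
  r ⊆ ZFSet.prod a b ∧ ∀ u ∈ a, ∃ v ∈ b, ZFSet.pair u v ∈ r

/-- `c` is full in `mv(a, b)`: every element of `c` is a multi-valued function from `a` to `b`,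
and every multi-valued function from `a` to `b` contains an element of `c`. -/
def ZFullIn (c a b : ZFSet.{u}) : Prop :=
  (∀ s ∈ c, Zmv a b s) ∧ ∀ r : ZFSet.{u}, Zmv a b r → ∃ s ∈ c, s ⊆ r

/-- `⋀ a` : the infimum of a set `a` of truth values (subsets of `{∅}`). -/
noncomputable def ZInf (a : ZFSet.{u}) : ZFSet.{u} :=
  ZFSet.sep (fun x => ∀ u ∈ a, x ∈ u) ({∅} : ZFSet.{u})

noncomputable instance instDefAll {n : ℕ} (F : (Fin n → ZFSet.{u}) → ZFSet.{u}) :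
    ZFSet.Definable n F :=
  Classical.allZFSetDefinable F

namespace Prop64
open ZFSet Ordinal Cardinal
open scoped Classical

/-- Bundle of hypotheses. -/
structure Good (I : ZFSet.{u}) : Prop where
  hr : ZRegular I
  hw : ZFSet.omega ∈ I
  hU : ∀ a ∈ I, ZFSet.sUnion a ∈ I
  hfull : ∀ a ∈ I, ∀ b ∈ I, ∃ c ∈ I, ZFullIn c a b

variable {I : ZFSet.{u}}

theorem Good.tr (h : Good I) {x y : ZFSet.{u}} (hx : x ∈ I) (hy : y ∈ x) : y ∈ I :=
  h.hr.1 x hx y hy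

theorem Good.image_mem (h : Good I) {a : ZFSet.{u}} (ha : a ∈ I) (f : ZFSet.{u} → ZFSet.{u})
    (hf : ∀ x ∈ a, f x ∈ I) : ZFSet.image f a ∈ I := by
  set R : ZFSet.{u} := ZFSet.image (fun x => ZFSet.pair x (f x)) a with hRdef
  have hR : ∀ {x y : ZFSet.{u}}, ZFSet.pair x y ∈ R ↔ x ∈ a ∧ y = f x := by
    intro x y
    rw [hRdef]; simp only [ZFSet.mem_image]
    constructor
    · rintro ⟨x', hx', he⟩
      obtain ⟨rfl, rfl⟩ := ZFSet.pair_injective he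
      exact ⟨hx', rfl⟩
    · rintro ⟨hx, rfl⟩
      exact ⟨x, hx, rfl⟩
  have hsub : R ⊆ ZFSet.prod I I := by
    intro z hz
    rw [hRdef] at hz
    simp only [ZFSet.mem_image] at hz
    obtain ⟨x, hx, rfl⟩ := hz
    exact ZFSet.pair_mem_prod.2 ⟨h.tr ha hx, hf x hx⟩
  obtain ⟨c, hc, hc1, hc2⟩ := h.hr.2.2 a ha R hsub
    (fun x hx => ⟨f x, hf x hx, hR.2 ⟨hx, rfl⟩⟩)
  have : ZFSet.image f a = c := by
    apply ZFSet.ext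
    intro y
    simp only [ZFSet.mem_image]
    constructor
    · rintro ⟨x, hx, rfl⟩
      obtain ⟨y', hy', hp⟩ := hc1 x hx
      obtain ⟨-, rfl⟩ := hR.1 hp
      exact hy'
    · intro hy
      obtain ⟨x, hx, hp⟩ := hc2 y hy
      obtain ⟨-, rfl⟩ := hR.1 hp
      exact ⟨x, hx, rfl⟩
  rw [this]; exact hc

theorem Good.empty_mem (h : Good I) : (∅ : ZFSet.{u}) ∈ I :=
  h.tr h.hw ZFSet.omega_zero

theorem Good.one_mem (h : Good I) : ({∅} : ZFSet.{u}) ∈ I :=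
  h.tr h.hw (ZFSet.omega_succ ZFSet.omega_zero)

theorem Good.two_mem (h : Good I) :
    (insert ({∅} : ZFSet.{u}) ({∅} : ZFSet.{u})) ∈ I :=
  h.tr h.hw (ZFSet.omega_succ (ZFSet.omega_succ ZFSet.omega_zero))

/-- Separation: subsets of members are members. -/
theorem Good.sep_mem (h : Good I) {a b : ZFSet.{u}} (ha : a ∈ I) (hb : b ⊆ a) : b ∈ I := by
  have hone : ({∅} : ZFSet.{u}) ∈ I := h.one_mem
  have hsing : ∀ x ∈ I, ({x} : ZFSet.{u}) ∈ I := by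
    intro x hx
    have : ZFSet.image (fun _ => x) ({∅} : ZFSet.{u}) = ({x} : ZFSet.{u}) := by
      apply ZFSet.ext; intro y
      simp only [ZFSet.mem_image, ZFSet.mem_singleton]
      constructor
      · rintro ⟨z, _, rfl⟩; rfl
      · rintro rfl; exact ⟨∅, rfl, rfl⟩
    rw [← this]
    exact h.image_mem hone _ (fun _ _ => hx)
  have key : ZFSet.sUnion (ZFSet.image (fun x => if x ∈ b then ({x} : ZFSet.{u}) else ∅) a) = b := by
    apply ZFSet.ext; intro y
    rw [ZFSet.mem_sUnion]
    constructor
    · rintro ⟨z, hz, hyz⟩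
      simp only [ZFSet.mem_image] at hz
      obtain ⟨x, hx, rfl⟩ := hz
      by_cases hxb : x ∈ b
      · rw [if_pos hxb] at hyz
        rwa [ZFSet.mem_singleton.1 hyz]
      · rw [if_neg hxb] at hyz
        exact absurd hyz (ZFSet.notMem_empty y)
    · intro hy
      refine ⟨{y}, ?_, ZFSet.mem_singleton.2 rfl⟩
      simp only [ZFSet.mem_image]
      exact ⟨y, hb hy, if_pos hy⟩
  rw [← key]
  apply h.hU
  apply h.image_mem ha
  intro x _
  by_cases hxb : x ∈ b
  · rw [if_pos hxb]; exact hsing x (h.tr ha (hb hxb))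
  · rw [if_neg hxb]; exact h.empty_mem

/-- Powerset closure. -/
theorem Good.powerset_mem (h : Good I) {a : ZFSet.{u}} (ha : a ∈ I) :
    ZFSet.powerset a ∈ I := by
  have hne : ({∅} : ZFSet.{u}) ≠ ∅ := by
    intro he
    have h0 : (∅ : ZFSet.{u}) ∈ ({∅} : ZFSet.{u}) := ZFSet.mem_singleton.2 rfl
    rw [he] at h0
    exact ZFSet.notMem_empty ∅ h0
  obtain ⟨c, hc, hcfull⟩ := h.hfull a ha _ h.two_mem
  have hmem_two : ∀ {v : ZFSet.{u}},
      v ∈ (insert ({∅} : ZFSet.{u}) ({∅} : ZFSet.{u})) ↔ v = {∅} ∨ v = ∅ := by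
    intro v
    simp [ZFSet.mem_insert_iff, ZFSet.mem_singleton]
  have himg : ZFSet.image
      (fun s => ZFSet.sep (fun x => ZFSet.pair x ({∅} : ZFSet.{u}) ∈ s) a) c
      = ZFSet.powerset a := by
    apply ZFSet.ext; intro b
    simp only [ZFSet.mem_image, ZFSet.mem_powerset]
    constructor
    · rintro ⟨s, hs, rfl⟩
      intro x hx
      exact (ZFSet.mem_sep.1 hx).1
    · intro hb
      set r : ZFSet.{u} :=
        ZFSet.image (fun x => ZFSet.pair x (if x ∈ b then ({∅} : ZFSet.{u}) else ∅)) a with hr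
      have hrpair : ∀ {x y : ZFSet.{u}}, ZFSet.pair x y ∈ r ↔
          x ∈ a ∧ y = (if x ∈ b then ({∅} : ZFSet.{u}) else ∅) := by
        intro x y
        rw [hr]; simp only [ZFSet.mem_image]
        constructor
        · rintro ⟨x', hx', he⟩
          obtain ⟨rfl, rfl⟩ := ZFSet.pair_injective he
          exact ⟨hx', rfl⟩
        · rintro ⟨hx, rfl⟩
          exact ⟨x, hx, rfl⟩
      have hrmv : Zmv a (insert ({∅} : ZFSet.{u}) ({∅} : ZFSet.{u})) r := by
        constructor
        · intro z hz
          rw [hr] at hz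
          simp only [ZFSet.mem_image] at hz
          obtain ⟨x, hx, rfl⟩ := hz
          refine ZFSet.pair_mem_prod.2 ⟨hx, hmem_two.2 ?_⟩
          by_cases hxb : x ∈ b
          · rw [if_pos hxb]; exact Or.inl rfl
          · rw [if_neg hxb]; exact Or.inr rfl
        · intro u hu
          refine ⟨_, hmem_two.2 ?_, hrpair.2 ⟨hu, rfl⟩⟩
          by_cases hub : u ∈ b
          · rw [if_pos hub]; exact Or.inl rfl
          · rw [if_neg hub]; exact Or.inr rfl
      obtain ⟨s, hs, hsr⟩ := hcfull.2 r hrmv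
      refine ⟨s, hs, ?_⟩
      apply ZFSet.ext; intro x
      rw [ZFSet.mem_sep]
      constructor
      · rintro ⟨hxa, hp⟩
        obtain ⟨-, he⟩ := hrpair.1 (hsr hp)
        by_cases hxb : x ∈ b
        · exact hxb
        · rw [if_neg hxb] at he
          exact absurd he hne
      · intro hxb
        have hxa := hb hxb
        refine ⟨hxa, ?_⟩
        obtain ⟨v, hv, hpv⟩ := (hcfull.1 s hs).2 x hxa
        obtain ⟨-, he⟩ := hrpair.1 (hsr hpv)
        rw [if_pos hxb] at he
        rwa [he] at hpv
  rw [← himg]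
  apply h.image_mem hc
  intro s _
  exact h.sep_mem ha (fun x hx => (ZFSet.mem_sep.1 hx).1)


/-! ### Transitive closure -/

def itU (x : ZFSet.{u}) : ℕ → ZFSet.{u}
  | 0 => x
  | n + 1 => ZFSet.sUnion (itU x n)

noncomputable def tc (x : ZFSet.{u}) : ZFSet.{u} :=
  ZFSet.sUnion (ZFSet.range fun n : ULift.{u} ℕ => itU x n.down)

theorem mem_tc {x y : ZFSet.{u}} : y ∈ tc x ↔ ∃ n : ℕ, y ∈ itU x n := by
  rw [tc, ZFSet.mem_sUnion]
  constructor
  · rintro ⟨z, hz, hyz⟩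
    rw [ZFSet.mem_range] at hz
    obtain ⟨n, rfl⟩ := hz
    exact ⟨n.down, hyz⟩
  · rintro ⟨n, hn⟩
    exact ⟨itU x n, ZFSet.mem_range.2 ⟨ULift.up n, rfl⟩, hn⟩

theorem mem_tc_of_mem {x y : ZFSet.{u}} (h : y ∈ x) : y ∈ tc x :=
  mem_tc.2 ⟨0, h⟩

theorem tc_trans {x y z : ZFSet.{u}} (hy : y ∈ tc x) (hz : z ∈ y) : z ∈ tc x := by
  obtain ⟨n, hn⟩ := mem_tc.1 hy
  exact mem_tc.2 ⟨n + 1, ZFSet.mem_sUnion.2 ⟨y, hn, hz⟩⟩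

theorem tc_sub {x y : ZFSet.{u}} (hyx : y ∈ x) : tc y ⊆ tc x := by
  have aux : ∀ n : ℕ, ∀ z ∈ itU y n, z ∈ tc x := by
    intro n
    induction n with
    | zero => exact fun z hz => tc_trans (mem_tc_of_mem hyx) hz
    | succ n ihn =>
      intro z hz
      obtain ⟨v, hv, hzv⟩ := ZFSet.mem_sUnion.1 hz
      exact tc_trans (ihn v hv) hzv
  intro z hz
  obtain ⟨n, hn⟩ := mem_tc.1 hz
  exact aux n z hn

theorem exists_rank_tc : ∀ {x : ZFSet.{u}} {γ : Ordinal.{u}}, γ < ZFSet.rank x →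
    ∃ z ∈ tc x, ZFSet.rank z = γ := by
  intro x
  induction x using ZFSet.inductionOn with
  | _ x ih =>
    intro γ hγ
    obtain ⟨y, hy, hγy⟩ := ZFSet.lt_rank_iff.1 hγ
    rcases hγy.lt_or_eq with hlt | heq
    · obtain ⟨z, hz, hrz⟩ := ih y hy hlt
      exact ⟨z, tc_sub hy hz, hrz⟩
    · exact ⟨y, mem_tc_of_mem hy, heq.symm⟩

def zNat : ℕ → ZFSet.{u}
  | 0 => ∅
  | n + 1 => insert (zNat n) (zNat n)

theorem zNat_mem_omega : ∀ n : ℕ, zNat.{u} n ∈ ZFSet.omega.{u}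
  | 0 => ZFSet.omega_zero
  | n + 1 => ZFSet.omega_succ (zNat_mem_omega n)

theorem rank_zNat : ∀ n : ℕ, ZFSet.rank (zNat.{u} n) = (n : Ordinal.{u})
  | 0 => ZFSet.rank_empty
  | n + 1 => by
    rw [zNat, ZFSet.rank_insert, rank_zNat n, max_eq_left (Order.le_succ _),
      Nat.cast_succ, Ordinal.add_one_eq_succ]

theorem zNat_inj {m n : ℕ} (h : zNat.{u} m = zNat.{u} n) : m = n := by
  have := congrArg ZFSet.rank h
  rw [rank_zNat, rank_zNat] at this
  exact_mod_cast this

theorem Good.itU_mem (h : Good I) {x : ZFSet.{u}} (hx : x ∈ I) : ∀ n, itU x n ∈ I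
  | 0 => hx
  | n + 1 => h.hU _ (h.itU_mem hx n)

theorem Good.tc_mem (h : Good I) {x : ZFSet.{u}} (hx : x ∈ I) : tc x ∈ I := by
  have key : ZFSet.sUnion (ZFSet.image
      (fun z => if hz : ∃ n : ℕ, zNat n = z then itU x hz.choose else ∅) ZFSet.omega)
      = tc x := by
    apply ZFSet.ext; intro y
    rw [ZFSet.mem_sUnion, mem_tc]
    constructor
    · rintro ⟨z, hz, hyz⟩
      simp only [ZFSet.mem_image] at hz
      obtain ⟨w, hw, rfl⟩ := hz
      by_cases hex : ∃ n : ℕ, zNat n = w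
      · rw [dif_pos hex] at hyz
        exact ⟨hex.choose, hyz⟩
      · rw [dif_neg hex] at hyz
        exact absurd hyz (ZFSet.notMem_empty y)
    · rintro ⟨n, hn⟩
      have hex : ∃ m : ℕ, zNat m = zNat.{u} n := ⟨n, rfl⟩
      refine ⟨if hz : ∃ m : ℕ, zNat m = zNat.{u} n then itU x hz.choose else ∅, ?_, ?_⟩
      · simp only [ZFSet.mem_image]
        exact ⟨zNat n, zNat_mem_omega n, rfl⟩
      · rw [dif_pos hex, zNat_inj hex.choose_spec]
        exact hn
  rw [← key]
  apply h.hU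
  apply h.image_mem h.hw
  intro z _
  by_cases hex : ∃ n : ℕ, zNat n = z
  · rw [dif_pos hex]; exact h.itU_mem hx _
  · rw [dif_neg hex]; exact h.empty_mem

/-! ### von Neumann ordinals and the cumulative hierarchy -/

noncomputable def vN (β : Ordinal.{u}) : ZFSet.{u} :=
  ZFSet.range fun γ : Shrink.{u} (Set.Iio β) =>
    vN ((equivShrink (Set.Iio β)).symm γ).1
termination_by β
decreasing_by exact ((equivShrink (Set.Iio β)).symm γ).2

theorem mem_vN {β : Ordinal.{u}} {y : ZFSet.{u}} : y ∈ vN β ↔ ∃ γ < β, vN γ = y := by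
  conv_lhs => rw [vN]
  rw [ZFSet.mem_range]
  constructor
  · rintro ⟨i, rfl⟩
    exact ⟨_, ((equivShrink (Set.Iio β)).symm i).2, rfl⟩
  · rintro ⟨γ, hγ, rfl⟩
    exact ⟨equivShrink (Set.Iio β) ⟨γ, hγ⟩, by simp⟩

theorem rank_vN : ∀ β : Ordinal.{u}, ZFSet.rank (vN β) = β := by
  intro β
  induction β using Ordinal.induction with
  | _ β ih =>
    conv_lhs => rw [vN]
    rw [ZFSet.rank_range]
    apply le_antisymm
    · apply Ordinal.lsub_le
      intro i
      rw [ih _ ((equivShrink (Set.Iio β)).symm i).2]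
      exact ((equivShrink (Set.Iio β)).symm i).2
    · by_contra hc
      push_neg at hc
      have h2 := Ordinal.lt_lsub
        (fun i : Shrink.{u} (Set.Iio β) =>
          ZFSet.rank (vN ((equivShrink (Set.Iio β)).symm i).1))
        (equivShrink (Set.Iio β) ⟨_, hc⟩)
      rw [Equiv.symm_apply_apply] at h2
      rw [ih _ hc] at h2
      exact lt_irrefl _ h2

theorem vN_mem_vN {γ β : Ordinal.{u}} (h : γ < β) : vN γ ∈ vN β :=
  mem_vN.2 ⟨γ, h, rfl⟩

noncomputable def Vz (β : Ordinal.{u}) : ZFSet.{u} :=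
  ZFSet.sUnion (ZFSet.range fun γ : Shrink.{u} (Set.Iio β) =>
    ZFSet.powerset (Vz ((equivShrink (Set.Iio β)).symm γ).1))
termination_by β
decreasing_by exact ((equivShrink (Set.Iio β)).symm γ).2

theorem mem_Vz {β : Ordinal.{u}} {y : ZFSet.{u}} : y ∈ Vz β ↔ ∃ γ < β, y ⊆ Vz γ := by
  conv_lhs => rw [Vz]
  rw [ZFSet.mem_sUnion]
  constructor
  · rintro ⟨z, hz, hyz⟩
    rw [ZFSet.mem_range] at hz
    obtain ⟨i, rfl⟩ := hz
    exact ⟨_, ((equivShrink (Set.Iio β)).symm i).2, ZFSet.mem_powerset.1 hyz⟩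
  · rintro ⟨γ, hγ, hsub⟩
    refine ⟨ZFSet.powerset (Vz γ), ?_, ZFSet.mem_powerset.2 hsub⟩
    rw [ZFSet.mem_range]
    exact ⟨equivShrink (Set.Iio β) ⟨γ, hγ⟩, by simp⟩

theorem mem_Vz_of_rank_lt : ∀ {x : ZFSet.{u}} {β : Ordinal.{u}}, ZFSet.rank x < β →
    x ∈ Vz β := by
  intro x
  induction x using ZFSet.inductionOn with
  | _ x ih =>
    intro β hβ
    refine mem_Vz.2 ⟨ZFSet.rank x, hβ, ?_⟩
    intro z hz
    exact ih z hz (ZFSet.rank_lt_of_mem hz)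

theorem Good.Vz_mem (h : Good I) : ∀ β : Ordinal.{u}, β < ZFSet.rank I → Vz β ∈ I := by
  intro β
  induction β using Ordinal.induction with
  | _ β ih =>
    intro hβ
    obtain ⟨x, hxI, hβx⟩ := ZFSet.lt_rank_iff.1 hβ
    have key : ZFSet.sUnion (ZFSet.image
        (fun z => if ZFSet.rank z < β then ZFSet.powerset (Vz (ZFSet.rank z)) else ∅) (tc x))
        = Vz β := by
      apply ZFSet.ext; intro y
      rw [ZFSet.mem_sUnion]
      constructor
      · rintro ⟨w, hw, hyw⟩
        simp only [ZFSet.mem_image] at hw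
        obtain ⟨z, hz, rfl⟩ := hw
        by_cases hr : ZFSet.rank z < β
        · rw [if_pos hr] at hyw
          exact mem_Vz.2 ⟨_, hr, ZFSet.mem_powerset.1 hyw⟩
        · rw [if_neg hr] at hyw
          exact absurd hyw (ZFSet.notMem_empty y)
      · intro hy
        obtain ⟨γ, hγ, hsub⟩ := mem_Vz.1 hy
        obtain ⟨z, hz, hrz⟩ := exists_rank_tc (lt_of_lt_of_le hγ hβx)
        refine ⟨if ZFSet.rank z < β then ZFSet.powerset (Vz (ZFSet.rank z)) else ∅, ?_, ?_⟩
        · simp only [ZFSet.mem_image]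
          exact ⟨z, hz, rfl⟩
        · rw [if_pos (by rw [hrz]; exact hγ), hrz]
          exact ZFSet.mem_powerset.2 hsub
    rw [← key]
    apply h.hU
    apply h.image_mem (h.tc_mem hxI)
    intro z _
    by_cases hr : ZFSet.rank z < β
    · rw [if_pos hr]
      exact h.powerset_mem (ih _ hr (hr.trans hβ))
    · rw [if_neg hr]; exact h.empty_mem

theorem Good.vN_mem (h : Good I) {β : Ordinal.{u}} (hβ : β < ZFSet.rank I) : vN β ∈ I := by
  apply h.sep_mem (h.Vz_mem β hβ)
  intro y hy
  obtain ⟨γ, hγ, rfl⟩ := mem_vN.1 hy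
  apply mem_Vz_of_rank_lt
  rw [rank_vN]
  exact hγ

theorem Good.mem_iff (h : Good I) {x : ZFSet.{u}} : x ∈ I ↔ ZFSet.rank x < ZFSet.rank I := by
  constructor
  · exact ZFSet.rank_lt_of_mem
  · intro hx
    apply h.tr (h.powerset_mem (h.Vz_mem _ hx))
    apply ZFSet.mem_powerset.2
    intro z hz
    exact mem_Vz_of_rank_lt (ZFSet.rank_lt_of_mem hz)


/-! ### Cardinalities -/

theorem mk_toSet_vN (β : Ordinal.{u}) :
    #(vN β).toSet = Cardinal.lift.{u+1} β.card := by
  rw [← Ordinal.mk_Iio_ordinal]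
  apply Cardinal.mk_congr
  symm
  refine Equiv.ofBijective (fun γ : Set.Iio β => ⟨vN γ.1, mem_vN.2 ⟨γ.1, γ.2, rfl⟩⟩) ⟨?_, ?_⟩
  · intro γ δ he
    have := congrArg (fun t : (vN β).toSet => ZFSet.rank t.1) he
    simp only [rank_vN] at this
    exact Subtype.ext this
  · rintro ⟨y, hy⟩
    obtain ⟨γ, hγ, rfl⟩ := mem_vN.1 hy
    exact ⟨⟨γ, hγ⟩, rfl⟩

theorem mk_toSet_powerset (a : ZFSet.{u}) :
    #(ZFSet.powerset a).toSet = 2 ^ #a.toSet := by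
  rw [← Cardinal.mk_set]
  apply Cardinal.mk_congr
  refine
    { toFun := fun y => {z : a.toSet | z.1 ∈ y.1}
      invFun := fun S => ⟨ZFSet.sep (fun z => ∃ hz : z ∈ a, (⟨z, hz⟩ : a.toSet) ∈ S) a,
        ZFSet.mem_powerset.2 fun z hz => (ZFSet.mem_sep.1 hz).1⟩
      left_inv := ?_
      right_inv := ?_ }
  · rintro ⟨y, hy⟩
    apply Subtype.ext
    apply ZFSet.ext
    intro z
    simp only [ZFSet.mem_sep]
    constructor
    · rintro ⟨hza, hz, hmem⟩
      exact hmem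
    · intro hzy
      have hza : z ∈ a := ZFSet.mem_powerset.1 hy hzy
      exact ⟨hza, hza, hzy⟩
  · intro S
    ext z
    simp only [Set.mem_setOf_eq, ZFSet.mem_sep]
    constructor
    · rintro ⟨hza, hz, hmem⟩
      rwa [Subtype.eta] at hmem
    · intro hzS
      exact ⟨z.2, z.2, by rwa [Subtype.eta]⟩

theorem Good.vN_mem_of_card_le (h : Good I) {μ : Cardinal.{u}} (hμ : μ.ord < ZFSet.rank I) :
    ∀ β : Ordinal.{u}, β.card ≤ 2 ^ μ → vN β ∈ I := by
  intro β
  induction β using Ordinal.induction with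
  | _ β ih =>
  intro hβ
  rcases eq_or_ne β 0 with rfl | hβ0
  · have hv0 : vN (0 : Ordinal.{u}) = ∅ := by
      rw [ZFSet.eq_empty]
      intro y hy
      obtain ⟨γ, hγ, -⟩ := mem_vN.1 hy
      exact absurd hγ (by simp)
    rw [hv0]
    exact h.empty_mem
  have haI : ZFSet.powerset (vN μ.ord) ∈ I := h.powerset_mem (h.vN_mem hμ)
  have hcard : #(ZFSet.powerset (vN μ.ord)).toSet = Cardinal.lift.{u+1} (2 ^ μ) := by
    rw [mk_toSet_powerset, mk_toSet_vN, Cardinal.card_ord, Cardinal.lift_two_power]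
  have hle : #(Set.Iio β) ≤ #(ZFSet.powerset (vN μ.ord)).toSet := by
    rw [Ordinal.mk_Iio_ordinal, hcard]
    exact Cardinal.lift_le.2 hβ
  obtain ⟨e⟩ := Cardinal.le_def _ _ |>.1 hle
  haveI : Nonempty (Set.Iio β) := ⟨⟨0, pos_iff_ne_zero.2 hβ0⟩⟩
  set σ : (ZFSet.powerset (vN μ.ord)).toSet → Set.Iio β := Function.invFun e with hσdef
  have hσ : Function.Surjective σ := Function.invFun_surjective e.injective
  have key : ZFSet.image
      (fun z => if hz : z ∈ ZFSet.powerset (vN μ.ord) then vN (σ ⟨z, hz⟩).1 else ∅)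
      (ZFSet.powerset (vN μ.ord)) = vN β := by
    apply ZFSet.ext; intro y
    simp only [ZFSet.mem_image]
    constructor
    · rintro ⟨z, hz, rfl⟩
      rw [dif_pos hz]
      exact mem_vN.2 ⟨_, (σ ⟨z, hz⟩).2, rfl⟩
    · intro hy
      obtain ⟨γ, hγ, rfl⟩ := mem_vN.1 hy
      obtain ⟨w, hw⟩ := hσ ⟨γ, hγ⟩
      have hw2 : (w.1 : ZFSet.{u}) ∈ ZFSet.powerset (vN μ.ord) := w.2
      refine ⟨w.1, hw2, ?_⟩
      rw [dif_pos hw2]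
      exact congrArg (fun t : Set.Iio β => vN t.1) hw
  rw [← key]
  apply h.image_mem haI
  intro z hz
  rw [dif_pos hz]
  exact ih _ (σ ⟨z, hz⟩).2
    (le_trans (Ordinal.card_le_card (le_of_lt (σ ⟨z, hz⟩).2)) hβ)

theorem Good.sl (h : Good I) {μ : Cardinal.{u}} (hμ : μ.ord < ZFSet.rank I) :
    ((2 : Cardinal.{u}) ^ μ).ord < ZFSet.rank I := by
  have succle : (Order.succ ((2 : Cardinal.{u}) ^ μ)).ord ≤ ZFSet.rank I := by
    by_contra hc
    push_neg at hc
    have hcard : (ZFSet.rank I).card ≤ 2 ^ μ :=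
      Order.lt_succ_iff.1 (Cardinal.lt_ord.1 hc)
    have := h.vN_mem_of_card_le hμ _ hcard
    have h2 := ZFSet.rank_lt_of_mem this
    rw [rank_vN] at h2
    exact lt_irrefl _ h2
  exact lt_of_lt_of_le (Cardinal.ord_lt_ord.2 (Order.lt_succ _)) succle

theorem Good.regular_card (h : Good I) (hω : (Ordinal.omega0 : Ordinal.{u}) < ZFSet.rank I) :
    (ZFSet.rank I).card ≤ (ZFSet.rank I).cof := by
  by_contra hc
  push_neg at hc
  obtain ⟨ι, f, hlsub, hι⟩ := Ordinal.exists_lsub_cof (ZFSet.rank I)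
  have hι0 : Nonempty ι := by
    by_contra hno
    haveI := not_nonempty_iff.1 hno
    rw [Ordinal.lsub_empty] at hlsub
    rw [← hlsub] at hω
    exact absurd hω (by simp)
  have hmkι : #ι < (ZFSet.rank I).card := by rw [hι]; exact hc
  have hordlt : (#ι).ord < ZFSet.rank I :=
    lt_of_lt_of_le (Cardinal.ord_lt_ord.2 hmkι) (Cardinal.ord_card_le _)
  have haI : vN ((#ι).ord) ∈ I := h.vN_mem hordlt
  have hcard : #(vN ((#ι).ord)).toSet = Cardinal.lift.{u+1} (#ι) := by
    rw [mk_toSet_vN, Cardinal.card_ord]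
  have hequiv : Nonempty (ULift.{u+1} ι ≃ (vN ((#ι).ord)).toSet) := by
    apply Cardinal.eq.1
    rw [Cardinal.mk_uLift, hcard]
  obtain ⟨e⟩ := hequiv
  set a : ZFSet.{u} := vN ((#ι).ord) with hadef
  set c : ZFSet.{u} := ZFSet.image
    (fun z => if hz : z ∈ a then vN (f (e.symm ⟨z, hz⟩).down) else ∅) a with hcdef
  have hcI : c ∈ I := by
    apply h.image_mem haI
    intro z hz
    rw [dif_pos hz]
    exact h.vN_mem (by rw [← hlsub]; exact Ordinal.lt_lsub f _)
  have key : ∀ i : ι, vN (f i) ∈ c := by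
    intro i
    rw [hcdef]
    simp only [ZFSet.mem_image]
    have hmem : ((e (ULift.up i)).1 : ZFSet.{u}) ∈ a := (e (ULift.up i)).2
    refine ⟨(e (ULift.up i)).1, hmem, ?_⟩
    rw [dif_pos hmem]
    have h2 : e.symm ⟨(e (ULift.up i)).1, hmem⟩ = ULift.up i := e.symm_apply_apply _
    rw [h2]
  have hge : ZFSet.rank I ≤ ZFSet.rank c := by
    rw [← hlsub]
    apply Ordinal.lsub_le
    intro i
    have := ZFSet.rank_lt_of_mem (key i)
    rwa [rank_vN] at this
  exact absurd (ZFSet.rank_lt_of_mem hcI) (not_lt.2 hge)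

theorem omega0_lt_rank (h : Good I) : (Ordinal.omega0 : Ordinal.{u}) < ZFSet.rank I := by
  have h1 : (Ordinal.omega0 : Ordinal.{u}) ≤ ZFSet.rank ZFSet.omega := by
    rw [Ordinal.omega0_le]
    intro n
    rw [← rank_zNat n]
    exact le_of_lt (ZFSet.rank_lt_of_mem (zNat_mem_omega n))
  exact lt_of_le_of_lt h1 (ZFSet.rank_lt_of_mem h.hw)

end Prop64

/-- Proposition 6.4 (a ZFC result): a weakly inaccessible set, characterized algebraically, is
`V_κ` for some strongly inaccessible cardinal `κ`. -/
theorem weakly_inaccessible_is_Vkappa (I : ZFSet.{u})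
    (h1 : ZRegular I)
    (h2 : ZFSet.omega ∈ I)
    (h3 : ∀ a ∈ I, ZFSet.sUnion a ∈ I)
    (h4 : ∀ a ∈ I, (∀ u ∈ a, u ⊆ ({∅} : ZFSet.{u})) → ZInf a ∈ I)
    (h5 : ∀ a ∈ I, ∀ b ∈ I, ∃ c ∈ I, ZFullIn c a b) :
    ∃ κ : Cardinal.{u}, κ.IsInaccessible ∧
      ∀ x : ZFSet.{u}, x ∈ I ↔ ZFSet.rank x < κ.ord := by
  have hg : Prop64.Good I := ⟨h1, h2, h3, h5⟩
  set o : Ordinal.{u} := ZFSet.rank I with hodef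
  set κ : Cardinal.{u} := o.card with hκdef
  have hω : (Ordinal.omega0 : Ordinal.{u}) < o := Prop64.omega0_lt_rank hg
  have hord : κ.ord = o := by
    apply le_antisymm (Cardinal.ord_card_le o)
    by_contra hc
    push_neg at hc
    have hsl := hg.sl (μ := κ) hc
    have h2c : ((2 : Cardinal.{u}) ^ κ) ≤ κ := by
      calc ((2 : Cardinal.{u}) ^ κ) = (((2 : Cardinal.{u}) ^ κ).ord).card := by
            rw [Cardinal.card_ord]
        _ ≤ o.card := Ordinal.card_le_card (le_of_lt hsl)
    exact absurd h2c (not_le.2 (Cardinal.cantor κ))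
  have haleph : Cardinal.aleph0 < κ := by
    have h20 : ((2 : Cardinal.{u}) ^ (Cardinal.aleph0 : Cardinal.{u})).ord < o :=
      hg.sl (by rw [Cardinal.ord_aleph0]; exact hω)
    rw [← hord] at h20
    exact lt_trans (Cardinal.cantor Cardinal.aleph0) (Cardinal.ord_lt_ord.1 h20)
  refine ⟨κ, Cardinal.IsInaccessible.mk haleph ?_ ?_, ?_⟩
  · rw [hord]
    exact hg.regular_card hω
  · intro μ hμ
    have : ((2 : Cardinal.{u}) ^ μ).ord < o := by
      apply hg.sl
      rw [← hodef, ← hord]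
      exact Cardinal.ord_lt_ord.2 hμ
    rw [← hord] at this
    exact Cardinal.ord_lt_ord.1 this
  · intro x
    rw [hord]
    exact hg.mem_iff
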